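/- Generalized cumulants formula: for any partition π = {B_1,...,B_m} of {1,...,i}, the generalized cumulant κ_π := κ(Π_{j∈B_1} X_j, ..., Π_{j∈B_m} X_j) satisfies κ_π = Σ_{ρ∈Π_i, ρ ≥ π} (-1)^{|ρ|-1}(|ρ|-1)! Π_{C∈ρ} E[Π_{j∈C} X_j]. -/

import Mathlib

open Finset
open scoped Classical

/-- The generalized cumulant `κ_π` of McCullagh: for a partition
`π = {B_1,…,B_m}` of `{1,…,i}` this is the joint cumulant
`κ(Π_{j∈B_1} X_j, …, Π_{j∈B_m} X_j)`, expressed via the Möbius partition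
formula over partitions `τ` of the set of blocks of `π`; the moment of a
product of blocks `A ⊆ π.parts` is `m (⋃ A)`. -/
noncomputable def genCumulant {R : Type*} [CommRing R] {i : ℕ}
    (m : Finset (Fin i) → R) (π : Finpartition (Finset.univ : Finset (Fin i))) : R :=
  ∑ τ : Finpartition π.parts,
    (Nat.factorial (τ.parts.card - 1) : R) * (-1 : R) ^ (τ.parts.card - 1) *
      ∏ A ∈ τ.parts, m (A.sup id)

section Aux

variable {i : ℕ} (π : Finpartition (Finset.univ : Finset (Fin i)))

/-- Blocks of a partition `τ` of `π.parts` have pairwise-disjoint unions. -/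
lemma sup_disjoint (τ : Finpartition π.parts) {A A' : Finset (Finset (Fin i))}
    (hA : A ∈ τ.parts) (hA' : A' ∈ τ.parts) (hne : A ≠ A') :
    Disjoint (A.sup id) (A'.sup id) := by
  rw [Finset.disjoint_sup_left]
  intro B hB
  rw [Finset.disjoint_sup_right]
  intro B' hB'
  have hBp : B ∈ π.parts := τ.le hA hB
  have hB'p : B' ∈ π.parts := τ.le hA' hB'
  have hBB' : B ≠ B' := by
    rintro rfl
    exact Finset.disjoint_left.1 (τ.supIndep.pairwiseDisjoint hA hA' hne) hB hB'
  exact π.supIndep.pairwiseDisjoint hBp hB'p hBB'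

lemma supId_injOn (τ : Finpartition π.parts) :
    Set.InjOn (fun A => A.sup id) (τ.parts : Set (Finset (Finset (Fin i)))) := by
  intro A hA A' hA' h
  by_contra hne
  have hd := sup_disjoint π τ hA hA' hne
  rw [show A.sup id = A'.sup id from h, disjoint_self] at hd
  obtain ⟨B, hB⟩ := τ.nonempty_of_mem_parts hA'
  obtain ⟨x, hx⟩ := π.nonempty_of_mem_parts (τ.le hA' hB)
  have : x ∈ A'.sup id := Finset.mem_sup.2 ⟨B, hB, hx⟩
  rw [hd] at this
  exact absurd this (Finset.notMem_empty x)

/-- The coarser partition associated to a partition of the blocks of `π`. -/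
noncomputable def coarsen (τ : Finpartition π.parts) :
    Finpartition (Finset.univ : Finset (Fin i)) where
  parts := τ.parts.image fun A => A.sup id
  supIndep := by
    rw [Finset.supIndep_iff_pairwiseDisjoint]
    intro C hC C' hC' hne
    simp only [coe_image, Set.mem_image, mem_coe] at hC hC'
    obtain ⟨A, hA, rfl⟩ := hC
    obtain ⟨A', hA', rfl⟩ := hC'
    have : A ≠ A' := by rintro rfl; exact hne rfl
    simpa [Function.onFun] using sup_disjoint π τ hA hA' this
  sup_parts := by
    apply Finset.Subset.antisymm
    · intro x _; exact Finset.mem_univ x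
    · intro x _
      obtain ⟨B, hB, hxB⟩ := π.exists_mem (Finset.mem_univ x)
      obtain ⟨A, hA, hBA⟩ := τ.exists_mem hB
      refine Finset.mem_sup.2 ⟨A.sup id, Finset.mem_image_of_mem _ hA, ?_⟩
      exact Finset.mem_sup.2 ⟨B, hBA, hxB⟩
  bot_notMem := by
    simp only [bot_eq_empty, Finset.mem_image, not_exists]
    rintro A ⟨hA, hsup⟩
    obtain ⟨B, hB⟩ := τ.nonempty_of_mem_parts hA
    obtain ⟨x, hx⟩ := π.nonempty_of_mem_parts (τ.le hA hB)
    have : x ∈ A.sup id := Finset.mem_sup.2 ⟨B, hB, hx⟩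
    rw [hsup] at this
    exact absurd this (Finset.notMem_empty x)

lemma coarsen_parts (τ : Finpartition π.parts) :
    (coarsen π τ).parts = τ.parts.image fun A => A.sup id := rfl

/-- A block of `π` contained in a block of a coarser partition: the filter of
blocks of `π` inside `C` recovers the `τ`-block. -/
lemma filter_coarsen (τ : Finpartition π.parts) {A : Finset (Finset (Fin i))}
    (hA : A ∈ τ.parts) :
    π.parts.filter (fun B => B ⊆ A.sup id) = A := by
  apply Finset.Subset.antisymm
  · intro B hB
    rw [Finset.mem_filter] at hB
    obtain ⟨hBp, hBsub⟩ := hB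
    obtain ⟨A', hA', hBA'⟩ := τ.exists_mem hBp
    obtain ⟨x, hx⟩ := π.nonempty_of_mem_parts hBp
    have hx1 : x ∈ A.sup id := hBsub hx
    have hx2 : x ∈ A'.sup id := Finset.mem_sup.2 ⟨B, hBA', hx⟩
    have : A = A' := by
      by_contra hne
      exact Finset.disjoint_left.1 (sup_disjoint π τ hA hA' hne) hx1 hx2
    rwa [this]
  · intro B hB
    refine Finset.mem_filter.2 ⟨τ.le hA hB, ?_⟩
    exact Finset.le_sup (f := id) hB

end Aux

/-- Generalized cumulants in terms of moments: for any partition `π` of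
`{1,…,i}`, `κ_π = Σ_{ρ ≥ π} (-1)^{|ρ|-1}(|ρ|-1)! Π_{C∈ρ} E[Π_{j∈C} X_j]`,
the sum being over the partitions `ρ` coarser than `π`. -/
theorem genCumulant_eq_sum_coarser {R : Type*} [CommRing R]
    (i : ℕ) (m : Finset (Fin i) → R)
    (π : Finpartition (Finset.univ : Finset (Fin i))) :
    genCumulant m π =
      ∑ ρ ∈ (Finset.univ : Finset (Finpartition (Finset.univ : Finset (Fin i)))).filter
          (fun ρ => ∀ B ∈ π.parts, ∃ C ∈ ρ.parts, B ⊆ C),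
        (-1 : R) ^ (ρ.parts.card - 1) * (Nat.factorial (ρ.parts.card - 1) : R) *
          ∏ C ∈ ρ.parts, m C := by
  unfold genCumulant
  refine Finset.sum_bij (fun τ _ => coarsen π τ) ?_ ?_ ?_ ?_
  · -- maps into the filter
    intro τ _
    refine Finset.mem_filter.2 ⟨Finset.mem_univ _, ?_⟩
    intro B hB
    obtain ⟨A, hA, hBA⟩ := τ.exists_mem hB
    exact ⟨A.sup id, Finset.mem_image_of_mem _ hA, Finset.le_sup (f := id) hBA⟩
  · -- injective
    intro τ₁ _ τ₂ _ h
    have hp : (coarsen π τ₁).parts = (coarsen π τ₂).parts := congrArg Finpartition.parts h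
    rw [coarsen_parts, coarsen_parts] at hp
    ext A
    constructor
    · intro hA
      have : A.sup id ∈ τ₂.parts.image fun A => A.sup id := by
        rw [← hp]; exact Finset.mem_image_of_mem _ hA
      obtain ⟨A', hA', hAA'⟩ := Finset.mem_image.1 this
      have := filter_coarsen π τ₂ hA'
      rw [hAA'] at this
      rw [← filter_coarsen π τ₁ hA, this]
      exact hA'
    · intro hA
      have : A.sup id ∈ τ₁.parts.image fun A => A.sup id := by
        rw [hp]; exact Finset.mem_image_of_mem _ hA
      obtain ⟨A', hA', hAA'⟩ := Finset.mem_image.1 this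
      have := filter_coarsen π τ₁ hA'
      rw [hAA'] at this
      rw [← filter_coarsen π τ₂ hA, this]
      exact hA'
  · -- surjective
    intro ρ hρ
    rw [Finset.mem_filter] at hρ
    obtain ⟨-, hcoarse⟩ := hρ
    -- for each block B of π, it is contained in a unique part of ρ
    have key : ∀ C ∈ ρ.parts, ∀ B ∈ π.parts, (B ∩ C).Nonempty → B ⊆ C := by
      intro C hC B hB hBC
      obtain ⟨C', hC', hBC'⟩ := hcoarse B hB
      obtain ⟨x, hx⟩ := hBC
      rw [Finset.mem_inter] at hx
      have : C' = C := by
        by_contra hne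
        exact Finset.disjoint_left.1 (ρ.supIndep.pairwiseDisjoint hC' hC hne)
          (hBC' hx.1) hx.2
      rwa [this] at hBC'
    refine ⟨⟨ρ.parts.image fun C => π.parts.filter (fun B => B ⊆ C), ?_, ?_, ?_⟩,
      Finset.mem_univ _, ?_⟩
    · rw [Finset.supIndep_iff_pairwiseDisjoint]
      intro S hS S' hS' hne
      simp only [coe_image, Set.mem_image, mem_coe] at hS hS'
      obtain ⟨C, hC, rfl⟩ := hS
      obtain ⟨C', hC', rfl⟩ := hS'
      have hCC' : C ≠ C' := by rintro rfl; exact hne rfl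
      rw [Function.onFun, Finset.disjoint_left]
      intro B hB hB'
      simp only [id, Finset.mem_filter] at hB hB'
      obtain ⟨x, hx⟩ := π.nonempty_of_mem_parts hB.1
      exact Finset.disjoint_left.1 (ρ.supIndep.pairwiseDisjoint hC hC' hCC')
        (hB.2 hx) (hB'.2 hx)
    · apply Finset.Subset.antisymm
      · intro B hB
        obtain ⟨S, hS, hBS⟩ := Finset.mem_sup.1 hB
        obtain ⟨C, _, rfl⟩ := Finset.mem_image.1 hS
        exact (Finset.mem_filter.1 hBS).1
      · intro B hB
        obtain ⟨C, hC, hBC⟩ := hcoarse B hB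
        refine Finset.mem_sup.2 ⟨π.parts.filter (fun B => B ⊆ C),
          Finset.mem_image_of_mem _ hC, Finset.mem_filter.2 ⟨hB, hBC⟩⟩
    · simp only [bot_eq_empty, Finset.mem_image, not_exists]
      rintro C ⟨hC, hfil⟩
      obtain ⟨x, hx⟩ := ρ.nonempty_of_mem_parts hC
      obtain ⟨B, hB, hxB⟩ := π.exists_mem (Finset.mem_univ x)
      have hBC : B ⊆ C := key C hC B hB ⟨x, Finset.mem_inter.2 ⟨hxB, hx⟩⟩
      have : B ∈ π.parts.filter (fun B => B ⊆ C) := Finset.mem_filter.2 ⟨hB, hBC⟩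
      rw [hfil] at this
      exact absurd this (Finset.notMem_empty B)
    · -- coarsen of this τ equals ρ
      apply Finpartition.ext
      rw [coarsen_parts]
      simp only
      rw [Finset.image_image]
      have : ∀ C ∈ ρ.parts, (π.parts.filter (fun B => B ⊆ C)).sup id = C := by
        intro C hC
        apply Finset.Subset.antisymm
        · intro x hx
          obtain ⟨B, hB, hxB⟩ := Finset.mem_sup.1 hx
          exact (Finset.mem_filter.1 hB).2 hxB
        · intro x hx
          obtain ⟨B, hB, hxB⟩ := π.exists_mem (Finset.mem_univ x)
          have hBC : B ⊆ C := key C hC B hB ⟨x, Finset.mem_inter.2 ⟨hxB, hx⟩⟩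
          exact Finset.mem_sup.2 ⟨B, Finset.mem_filter.2 ⟨hB, hBC⟩, hxB⟩
      calc (ρ.parts.image fun C => (π.parts.filter (fun B => B ⊆ C)).sup id)
          = ρ.parts.image id := Finset.image_congr (fun C hC => this C hC)
        _ = ρ.parts := Finset.image_id
  · -- summand equality
    intro τ _
    have hcard : (coarsen π τ).parts.card = τ.parts.card := by
      rw [coarsen_parts]
      exact Finset.card_image_of_injOn (supId_injOn π τ)
    have hprod : ∏ C ∈ (coarsen π τ).parts, m C = ∏ A ∈ τ.parts, m (A.sup id) := by
      rw [coarsen_parts, Finset.prod_image]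
      intro A hA A' hA' h
      exact supId_injOn π τ hA hA' h
    rw [hcard, hprod]
    ring
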